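/- Let g = g₁⋯g_r be an element of G = A ∗_C B given in a cyclically reduced form with r ≥ 2, and let h be a cyclically reduced element of G conjugate to g in G, with cyclically reduced form h = h₁⋯h_s. Then s = r, and there exist an index i ∈ {1, …, r} and an element c ∈ C such that h = c⁻¹·(g_i g_{i+1}⋯g_r g₁⋯g_{i−1})·c; that is, h is obtained from g by a cyclic permutation of g₁, …, g_r followed by conjugation by an element of C. -/

import Mathlib

open Monoid

universe u

/-- The two factors of the amalgam, indexed by `Bool`. -/
def Fac (A B : Type u) : Bool → Type u
  | true => A
  | false => B

instance FacGroup (A B : Type u) [Group A] [Group B] : (b : Bool) → Group (Fac A B b)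
  | true => inferInstanceAs (Group A)
  | false => inferInstanceAs (Group B)

variable {A B C : Type u} [Group A] [Group B] [Group C]

/-- The family of monomorphisms `C → A`, `C → B`. -/
def amalgHom (φ : C →* A) (ψ : C →* B) : (b : Bool) → C →* Fac A B b
  | true => φ
  | false => ψ

variable (φ : C →* A) (ψ : C →* B)

/-- The amalgamated free product `G = A ∗_C B`, i.e. the pushout of `φ` and `ψ`. -/
abbrev Amalg : Type u := Monoid.PushoutI (amalgHom φ ψ)

/-- The factor `A`, identified with its image in `G = A ∗_C B`. -/
def facA : Subgroup (Amalg φ ψ) := (Monoid.PushoutI.of (φ := amalgHom φ ψ) true).range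

/-- The factor `B`, identified with its image in `G = A ∗_C B`. -/
def facB : Subgroup (Amalg φ ψ) := (Monoid.PushoutI.of (φ := amalgHom φ ψ) false).range

/-- The amalgamated subgroup `C`, identified with its image in `G = A ∗_C B`. -/
def amalgC : Subgroup (Amalg φ ψ) := (Monoid.PushoutI.base (amalgHom φ ψ)).range

/-- `c * g₁ ⋯ gₙ` (with the list `L = [g₁, …, gₙ]`) is a reduced form:
`c ∈ C`, each `gᵢ ∈ (A ∪ B) ∖ C`, and consecutive letters lie in different factors. -/
def ReducedForm (c : Amalg φ ψ) (L : List (Amalg φ ψ)) : Prop :=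
  c ∈ amalgC φ ψ ∧
  (∀ x ∈ L, (x ∈ facA φ ψ ∨ x ∈ facB φ ψ) ∧ x ∉ amalgC φ ψ) ∧
  L.Chain' (fun x y => (x ∈ facA φ ψ → y ∈ facB φ ψ) ∧ (x ∈ facB φ ψ → y ∈ facA φ ψ))

/-- A reduced form `c * g₁ ⋯ gₙ` is cyclically reduced if `n = 0`, or `n = 1` and the
element is not conjugate to an element of `C`, or `n ≥ 2` and `g₁`, `gₙ` lie in different
factors. -/
def CyclicallyReducedForm (c : Amalg φ ψ) (L : List (Amalg φ ψ)) : Prop :=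
  ReducedForm φ ψ c L ∧
  (L.length = 0 ∨
    (L.length = 1 ∧ ∀ x : Amalg φ ψ, x⁻¹ * (c * L.prod) * x ∉ amalgC φ ψ) ∨
    (2 ≤ L.length ∧ ∀ x y : Amalg φ ψ, x ∈ L.head? → y ∈ L.getLast? →
      ((x ∈ facA φ ψ → y ∈ facB φ ψ) ∧ (x ∈ facB φ ψ → y ∈ facA φ ψ))))

/-- An element of `G = A ∗_C B` is cyclically reduced if it has a cyclically reduced
reduced form. -/
def CyclicallyReduced (g : Amalg φ ψ) : Prop :=
  ∃ (c : Amalg φ ψ) (L : List (Amalg φ ψ)), g = c * L.prod ∧ CyclicallyReducedForm φ ψ c L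

section Aux

open Monoid PushoutI

variable {A B C : Type u} [Group A] [Group B] [Group C] {φ : C →* A} {ψ : C →* B}

/-- The two factors, indexed by `Bool`. -/
def fac (φ : C →* A) (ψ : C →* B) (b : Bool) : Subgroup (Amalg φ ψ) :=
  (Monoid.PushoutI.of (φ := amalgHom φ ψ) b).range

lemma fac_true : fac φ ψ true = facA φ ψ := rfl
lemma fac_false : fac φ ψ false = facB φ ψ := rfl

lemma amalgHom_injective (hφ : Function.Injective φ) (hψ : Function.Injective ψ) :
    ∀ b, Function.Injective (amalgHom φ ψ b)
  | true => hφ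
  | false => hψ

lemma amalgC_le_fac (b : Bool) : amalgC φ ψ ≤ fac φ ψ b := by
  rintro x ⟨c, rfl⟩
  exact ⟨amalgHom φ ψ b c, Monoid.PushoutI.of_apply_eq_base (amalgHom φ ψ) b c⟩

lemma mem_fac_both (hφ : Function.Injective φ) (hψ : Function.Injective ψ)
    {x : Amalg φ ψ} {b : Bool} (h1 : x ∈ fac φ ψ b) (h2 : x ∈ fac φ ψ (!b)) :
    x ∈ amalgC φ ψ := by
  have := Monoid.PushoutI.inf_of_range_eq_base_range (φ := amalgHom φ ψ)
    (amalgHom_injective hφ hψ) (i := b) (j := !b) (by cases b <;> simp)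
  have hx : x ∈ (Monoid.PushoutI.of (φ := amalgHom φ ψ) b).range ⊓
      (Monoid.PushoutI.of (φ := amalgHom φ ψ) (!b)).range := ⟨h1, h2⟩
  rw [this] at hx
  exact hx

/-- `x` is a letter of factor `b`, not in the amalgamated subgroup. -/
def IsLt (b : Bool) (x : Amalg φ ψ) : Prop := x ∈ fac φ ψ b ∧ x ∉ amalgC φ ψ

/-- `x` is a letter. -/
def Letter (x : Amalg φ ψ) : Prop := ∃ b, IsLt b x

/-- `x` and `y` are letters of different factors. -/
def ARel (x y : Amalg φ ψ) : Prop := ∃ b, IsLt b x ∧ IsLt (!b) y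

section inj
variable (hφ : Function.Injective φ) (hψ : Function.Injective ψ)
include hφ hψ

lemma IsLt.unique {x : Amalg φ ψ} {b b' : Bool} (h : IsLt b x) (h' : IsLt b' x) : b = b' := by
  by_contra hbb
  have : b' = !b := by cases b <;> cases b' <;> simp_all
  exact h.2 (mem_fac_both hφ hψ h.1 (this ▸ h'.1))

end inj

lemma ARel.symm {x y : Amalg φ ψ} (h : ARel x y) : ARel y x := by
  obtain ⟨b, hx, hy⟩ := h
  exact ⟨!b, hy, by simpa using hx⟩

lemma IsLt.mul_c {x c : Amalg φ ψ} {b : Bool} (h : IsLt b x) (hc : c ∈ amalgC φ ψ) :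
    IsLt b (x * c) :=
  ⟨mul_mem h.1 (amalgC_le_fac b hc), fun hm => h.2 (by simpa using mul_mem hm (inv_mem hc))⟩

lemma IsLt.c_mul {x c : Amalg φ ψ} {b : Bool} (h : IsLt b x) (hc : c ∈ amalgC φ ψ) :
    IsLt b (c * x) :=
  ⟨mul_mem (amalgC_le_fac b hc) h.1, fun hm => h.2 (by simpa using mul_mem (inv_mem hc) hm)⟩

lemma IsLt.inv {x : Amalg φ ψ} {b : Bool} (h : IsLt b x) : IsLt b x⁻¹ :=
  ⟨inv_mem h.1, fun hm => h.2 (by simpa using inv_mem hm)⟩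

lemma IsLt.conj_c {x c : Amalg φ ψ} {b : Bool} (h : IsLt b x) (hc : c ∈ amalgC φ ψ) :
    IsLt b (c⁻¹ * x * c) := (h.c_mul (inv_mem hc)).mul_c hc

end Aux
section Aux2

open Monoid PushoutI

variable {A B C : Type u} [Group A] [Group B] [Group C] {φ : C →* A} {ψ : C →* B}

/-- Boolean factor indicator. -/
noncomputable def fB (x : Amalg φ ψ) : Bool := @decide (x ∈ facA φ ψ) (Classical.propDecidable _)

lemma IsLt.fB_eq (hφ : Function.Injective φ) (hψ : Function.Injective ψ)
    {x : Amalg φ ψ} {b : Bool} (h : IsLt b x) : fB x = b := by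
  cases b with
  | true => simpa [fB, fac_true] using h.1
  | false =>
    simp only [fB, decide_eq_false_iff_not]
    intro hx
    exact absurd (IsLt.unique hφ hψ (⟨hx, h.2⟩ : IsLt true x) h) (by simp)

lemma fB_transfer (hφ : Function.Injective φ) (hψ : Function.Injective ψ)
    {x y : Amalg φ ψ} {b : Bool} (hx : IsLt b x) (hy : Letter y) (h : fB x = fB y) :
    IsLt b y := by
  obtain ⟨b', hy⟩ := hy
  rwa [(by rw [← hx.fB_eq hφ hψ, h, hy.fB_eq hφ hψ] : b = b')]

lemma wordOf (hφ : Function.Injective φ) (hψ : Function.Injective ψ)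
    (l : List (Amalg φ ψ)) (hlet : ∀ x ∈ l, Letter x) (hch : l.Chain' ARel) :
    ∃ w : Monoid.CoprodI.Word (Fac A B), Monoid.PushoutI.Reduced (amalgHom φ ψ) w ∧
      Monoid.PushoutI.ofCoprodI w.prod = l.prod ∧ w.toList.map Sigma.fst = l.map fB := by
  induction l with
  | nil => exact ⟨.empty, by rintro g ⟨⟩, by simp [CoprodI.Word.prod, CoprodI.Word.empty], rfl⟩
  | cons x l' ih =>
    obtain ⟨w, hred, hprod, hmap⟩ := ih (fun y hy => hlet y (List.mem_cons_of_mem _ hy)) hch.tail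
    obtain ⟨b, hx⟩ := hlet x (List.mem_cons_self)
    obtain ⟨⟨a, ha⟩, hnc⟩ := hx
    have ha1 : a ≠ 1 := by rintro rfl; exact hnc (by simp [← ha, one_mem])
    have har : a ∉ (amalgHom φ ψ b).range := by
      rintro ⟨c, rfl⟩
      exact hnc ⟨c, by rw [← ha, Monoid.PushoutI.of_apply_eq_base]⟩
    have hhead : ∀ y ∈ w.toList.head?, (⟨b, a⟩ : Σ i, Fac A B i).fst ≠ y.fst := by
      intro y hy
      cases l' with
      | nil =>
        rw [List.map_nil, List.map_eq_nil_iff] at hmap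
        simp [hmap] at hy
      | cons z l'' =>
        have hz : IsLt (!b) z := by
          obtain ⟨b₀, hx', hz⟩ := (List.isChain_cons_cons.1 hch).1
          rwa [IsLt.unique hφ hψ hx' ⟨⟨a, ha⟩, hnc⟩] at hz
        have : (w.toList.map Sigma.fst).head? = some (fB z) := by rw [hmap]; simp
        rw [List.head?_map, Option.mem_def.1 hy] at this
        have h2 : y.fst = fB z := by simpa using this
        rw [h2, hz.fB_eq hφ hψ]
        simp
    refine ⟨⟨⟨b, a⟩ :: w.toList, ?_, List.isChain_cons.2 ⟨hhead, w.chain_ne⟩⟩, ?_, ?_, ?_⟩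
    · rintro p hp
      rcases List.mem_cons.1 hp with rfl | hp
      · exact ha1
      · exact w.ne_one _ hp
    · intro g hg
      rcases List.mem_cons.1 hg with rfl | hg
      · exact har
      · exact hred _ hg
    · show Monoid.PushoutI.ofCoprodI
        (List.prod (((⟨b, a⟩ : Σ i, Fac A B i) :: w.toList).map fun p => CoprodI.of p.snd)) = _
      rw [List.map_cons, List.prod_cons, map_mul, Monoid.PushoutI.ofCoprodI_of]
      show Monoid.PushoutI.of b a * Monoid.PushoutI.ofCoprodI w.prod = _
      rw [hprod, ha, List.prod_cons]
    · simp only [List.map_cons, hmap, List.cons.injEq, and_true]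
      exact (IsLt.fB_eq hφ hψ (b := b) (x := x) ⟨⟨a, ha⟩, hnc⟩).symm

lemma invar (hφ : Function.Injective φ) (hψ : Function.Injective ψ)
    {l₁ l₂ : List (Amalg φ ψ)}
    (h₁ : ∀ x ∈ l₁, Letter x) (c₁ : l₁.Chain' ARel)
    (h₂ : ∀ x ∈ l₂, Letter x) (c₂ : l₂.Chain' ARel)
    (h : l₁.prod = l₂.prod) : l₁.map fB = l₂.map fB := by
  obtain ⟨w₁, r₁, e₁, m₁⟩ := wordOf hφ hψ l₁ h₁ c₁
  obtain ⟨w₂, r₂, e₂, m₂⟩ := wordOf hφ hψ l₂ h₂ c₂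
  obtain ⟨d⟩ := Monoid.PushoutI.NormalWord.transversal_nonempty _ (amalgHom_injective hφ hψ)
  obtain ⟨w₁', p₁, q₁⟩ := r₁.exists_normalWord_prod_eq d
  obtain ⟨w₂', p₂, q₂⟩ := r₂.exists_normalWord_prod_eq d
  have hw : w₁' = w₂' := Monoid.PushoutI.NormalWord.prod_injective
    (by rw [p₁, p₂, e₁, e₂, h])
  rw [← m₁, ← m₂, ← q₁, ← q₂, hw]

end Aux2
section Aux3

open Monoid PushoutI

variable {A B C : Type u} [Group A] [Group B] [Group C] {φ : C →* A} {ψ : C →* B}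

/-- A cyclically reduced word of length at least 2. -/
def CycP (P : List (Amalg φ ψ)) : Prop :=
  (∀ x ∈ P, Letter x) ∧ P.Chain' ARel ∧ 2 ≤ P.length ∧
    ∀ x ∈ P.head?, ∀ y ∈ P.getLast?, ARel y x

lemma rotate_one_eq {α : Type*} (p : α) (ps : List α) : (p :: ps).rotate 1 = ps ++ [p] := by
  rw [List.rotate_cons_succ, List.rotate_zero]

lemma CycP.decomp {P : List (Amalg φ ψ)} (h : CycP P) :
    ∃ p z ps, P = p :: z :: ps := by
  obtain ⟨-, -, hlen, -⟩ := h
  cases P with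
  | nil => simp at hlen
  | cons p Q =>
    cases Q with
    | nil => simp at hlen
    | cons z ps => exact ⟨p, z, ps, rfl⟩

lemma CycP.rotate_one {P : List (Amalg φ ψ)} (h : CycP P) : CycP (P.rotate 1) := by
  obtain ⟨p, z, ps, rfl⟩ := h.decomp
  obtain ⟨hlet, hch, hlen, hc⟩ := h
  rw [rotate_one_eq]
  have hgl : ∃ pl, (z :: ps).getLast? = some pl ∧ (p :: z :: ps).getLast? = some pl :=
    ⟨(z :: ps).getLast (by simp), List.getLast?_eq_getLast (by simp), by
      rw [show (p :: z :: ps).getLast? = (z :: ps).getLast? by simp [List.getLast?_cons_cons]]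
      exact List.getLast?_eq_getLast (by simp)⟩
  obtain ⟨pl, hpl1, hpl2⟩ := hgl
  refine ⟨?_, ?_, by simpa using hlen, ?_⟩
  · intro x hx
    exact hlet x (by rcases List.mem_append.1 hx with h' | h' <;> simp_all)
  · refine List.isChain_append.2 ⟨hch.tail, by simp, ?_⟩
    intro x hx y hy
    simp only [List.head?_cons, Option.mem_def, Option.some.injEq] at hy
    subst hy
    exact hc p rfl x (by rw [hpl2, Option.mem_def, ← hpl1, hx])
  · intro x hx y hy
    have hx' : x = z := by simp at hx; exact hx.symm
    have hy' : y = p := by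
      rw [Option.mem_def, List.getLast?_concat] at hy
      exact (Option.some_injective _ hy).symm
    subst hx' hy'
    exact (List.isChain_cons_cons.1 hch).1

lemma CycP.rotate {P : List (Amalg φ ψ)} (h : CycP P) (n : ℕ) : CycP (P.rotate n) := by
  induction n with
  | zero => simpa using h
  | succ n ih => rw [← List.rotate_rotate]; exact ih.rotate_one

lemma prod_rotate_one {G : Type*} [Group G] (p : G) (ps : List G) :
    ((p :: ps).rotate 1).prod = p⁻¹ * (p :: ps).prod * p := by
  rw [rotate_one_eq]
  simp [List.prod_append]

lemma rotate_one_getLast? {α : Type*} (p : α) (ps : List α) :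
    ((p :: ps).rotate 1).getLast? = some p := by
  rw [rotate_one_eq]; exact List.getLast?_concat

lemma prod_rotate_pred {G : Type*} [Group G] {P : List G} (hP : P ≠ []) {pl : G}
    (hpl : P.getLast? = some pl) :
    (P.rotate (P.length - 1)).prod = pl * P.prod * pl⁻¹ := by
  have hlenQ : (P.rotate (P.length - 1)).length = P.length := List.length_rotate _ _
  have hQne : P.rotate (P.length - 1) ≠ [] := by
    intro h; rw [h] at hlenQ; exact hP (List.length_eq_zero_iff.1 hlenQ.symm)
  obtain ⟨q, qs, hQ⟩ : ∃ q qs, P.rotate (P.length - 1) = q :: qs := by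
    cases h : P.rotate (P.length - 1) with
    | nil => exact absurd h hQne
    | cons q qs => exact ⟨q, qs, rfl⟩
  have hrot : (q :: qs).rotate 1 = P := by
    rw [← hQ, List.rotate_rotate, Nat.sub_add_cancel (by
      cases P with | nil => exact absurd rfl hP | cons _ _ => simp), List.rotate_length]
  have hq : pl = q := by
    rw [← hrot, rotate_one_getLast? q qs] at hpl
    exact (Option.some_injective _ hpl).symm
  rw [hQ, ← hrot, rotate_one_eq, hq]
  simp [List.prod_append]
  group

end Aux3
section Aux4

open Monoid PushoutI

variable {A B C : Type u} [Group A] [Group B] [Group C] {φ : C →* A} {ψ : C →* B}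

/-- A conjugating stack over the rotation `L.rotate i`. -/
def Stack (L t : List (Amalg φ ψ)) (i : ℕ) : Prop :=
  t ≠ [] ∧ (∀ x ∈ t, Letter x) ∧ t.Chain' ARel ∧
    ∃ b q₁, t.head? = some q₁ ∧ IsLt b q₁ ∧
      ∃ pl, (L.rotate i).getLast? = some pl ∧ pl ∈ fac φ ψ b ∧ pl * q₁ ∉ amalgC φ ψ

/-- Invariant: `h` is a `C`-conjugated rotation of `L` (good), or a "partially cancelled"
conjugate of a rotation (bad). -/
def GB (L : List (Amalg φ ψ)) (h : Amalg φ ψ) : Prop :=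
  (∃ i c, c ∈ amalgC φ ψ ∧ h = c⁻¹ * (L.rotate i).prod * c) ∨
  (∃ i t, Stack L t i ∧ h = t.prod⁻¹ * (L.rotate i).prod * t.prod)

lemma exists_getLast? {α : Type*} {l : List α} (h : l ≠ []) : ∃ a, l.getLast? = some a :=
  ⟨l.getLast h, List.getLast?_eq_getLast h⟩

lemma key (hφ : Function.Injective φ) (hψ : Function.Injective ψ)
    {L : List (Amalg φ ψ)} (hL : CycP L) (i : ℕ) {u : Amalg φ ψ} {b₀ : Bool}
    (hu : u ∈ fac φ ψ b₀) :
    GB L (u⁻¹ * (L.rotate i).prod * u) := by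
  by_cases huc : u ∈ amalgC φ ψ
  · exact Or.inl ⟨i, u, huc, rfl⟩
  have hult : IsLt b₀ u := ⟨hu, huc⟩
  have hPc : CycP (L.rotate i) := hL.rotate i
  obtain ⟨p, z, ps, hPeq⟩ := hPc.decomp
  obtain ⟨pl, hpl⟩ := exists_getLast? (l := L.rotate i) (by rw [hPeq]; simp)
  have hrelplp : ARel pl p := hPc.2.2.2 p (by rw [hPeq]; rfl) pl hpl
  obtain ⟨b, hplt, hpt⟩ := hrelplp
  by_cases hbb : b₀ = b
  · subst hbb
    by_cases hmc : pl * u ∈ amalgC φ ψ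
    · refine Or.inl ⟨i + ((L.rotate i).length - 1), pl * u, hmc, ?_⟩
      rw [← List.rotate_rotate, prod_rotate_pred (by rw [hPeq]; simp) hpl]
      have hueq : u = pl⁻¹ * (pl * u) := by group
      rw [hueq]; group
    · refine Or.inr ⟨i, [u], ⟨by simp, by rintro x hx; rw [List.mem_singleton] at hx; subst hx; exact ⟨b₀, hult⟩, by simp [List.Chain'],
        b₀, u, rfl, hult, pl, hpl, hplt.1, hmc⟩, by simp⟩
  · have hb0 : b₀ = !b := by cases b <;> cases b₀ <;> simp_all
    subst hb0
    have hpfac : p ∈ fac φ ψ (!b) := hpt.1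
    by_cases htc : u⁻¹ * p ∈ amalgC φ ψ
    · refine Or.inl ⟨i + 1, (u⁻¹ * p)⁻¹, inv_mem htc, ?_⟩
      rw [← List.rotate_rotate, hPeq, prod_rotate_one, ← hPeq]
      group
    · refine Or.inr ⟨i + 1, [p⁻¹ * u], ⟨by simp, ?_, by simp [List.Chain'], !b, p⁻¹ * u, rfl, ?_, p, ?_, hpfac, by
        simpa using huc⟩, ?_⟩
      · intro x hx
        rw [List.mem_singleton] at hx
        subst hx
        refine ⟨!b, ?_⟩
        have : IsLt (!b) (u⁻¹ * p) := ⟨mul_mem (inv_mem hu) hpfac, htc⟩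
        have h2 := this.inv
        simpa [mul_inv_rev] using h2
      · have : IsLt (!b) (u⁻¹ * p) := ⟨mul_mem (inv_mem hu) hpfac, htc⟩
        have h2 := this.inv
        simpa [mul_inv_rev] using h2
      · rw [← List.rotate_rotate, hPeq, rotate_one_getLast?]
      · rw [← List.rotate_rotate, hPeq, prod_rotate_one, ← hPeq]
        simp only [List.prod_cons, List.prod_nil, mul_one]
        group

end Aux4
section Aux5

open Monoid PushoutI

variable {A B C : Type u} [Group A] [Group B] [Group C] {φ : C →* A} {ψ : C →* B}

lemma head?_append_left {α : Type*} {l₁ l₂ : List α} (h : l₁ ≠ []) :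
    (l₁ ++ l₂).head? = l₁.head? := by
  cases l₁ with
  | nil => exact absurd rfl h
  | cons a l => simp

lemma ARel.congr_right (hφ : Function.Injective φ) (hψ : Function.Injective ψ)
    {x o o' : Amalg φ ψ} (h : ARel x o) {bo : Bool} (ho : IsLt bo o) (ho' : IsLt bo o') :
    ARel x o' := by
  obtain ⟨b', hx, hbo⟩ := h
  exact ⟨b', hx, (IsLt.unique hφ hψ hbo ho) ▸ ho'⟩

lemma Stack.fold (hφ : Function.Injective φ) (hψ : Function.Injective ψ)
    {L t : List (Amalg φ ψ)} {i : ℕ} (hst : Stack L t i) {c : Amalg φ ψ}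
    (hc : c ∈ amalgC φ ψ) : ∃ t', Stack L t' i ∧ t'.prod = t.prod * c := by
  obtain ⟨hne, hlet, hch, b, q₁, hq₁, hqlt, pl, hpl, hplf, hplq⟩ := hst
  rcases List.eq_nil_or_concat t with rfl | ⟨ts, o, rfl⟩
  · exact absurd rfl hne
  rw [List.concat_eq_append] at *
  obtain ⟨bo, holt⟩ := hlet o (by simp)
  refine ⟨ts ++ [o * c], ⟨by simp, ?_, ?_, ?_⟩, by simp [List.prod_append]; group⟩
  · intro x hx
    rcases List.mem_append.1 hx with h' | h'
    · exact hlet x (List.mem_append.2 (Or.inl h'))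
    · rw [List.mem_singleton] at h'; subst h'
      exact ⟨bo, holt.mul_c hc⟩
  · obtain ⟨hc1, -, hc3⟩ := List.isChain_append.1 hch
    refine List.isChain_append.2 ⟨hc1, by simp, ?_⟩
    intro x hx y hy
    simp only [List.head?_cons, Option.mem_def, Option.some.injEq] at hy
    subst hy
    exact (hc3 x hx o (by simp)).congr_right hφ hψ holt (holt.mul_c hc)
  · cases ts with
    | nil =>
      have hq : q₁ = o := by simp at hq₁; exact hq₁.symm
      subst hq
      refine ⟨b, q₁ * c, by simp, hqlt.mul_c hc, pl, hpl, hplf, ?_⟩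
      intro hmem
      exact hplq (by simpa [mul_assoc] using mul_mem hmem (inv_mem hc))
    | cons z ts' =>
      refine ⟨b, q₁, ?_, hqlt, pl, hpl, hplf, hplq⟩
      rw [head?_append_left (by simp)]
      rw [head?_append_left (by simp)] at hq₁
      exact hq₁

lemma Stack.of_concat {L ts : List (Amalg φ ψ)} {o : Amalg φ ψ} {i : ℕ}
    (hst : Stack L (ts ++ [o]) i) (hne : ts ≠ []) : Stack L ts i := by
  obtain ⟨-, hlet, hch, b, q₁, hq₁, hqlt, pl, hpl, hplf, hplq⟩ := hst
  refine ⟨hne, fun x hx => hlet x (List.mem_append.2 (Or.inl hx)),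
    (List.isChain_append.1 hch).1, b, q₁, ?_, hqlt, pl, hpl, hplf, hplq⟩
  rwa [head?_append_left hne] at hq₁

lemma GB.step (hφ : Function.Injective φ) (hψ : Function.Injective ψ)
    {L : List (Amalg φ ψ)} (hL : CycP L) {h : Amalg φ ψ} (hgb : GB L h)
    {u : Amalg φ ψ} {b₀ : Bool} (hu : u ∈ fac φ ψ b₀) : GB L (u⁻¹ * h * u) := by
  rcases hgb with ⟨i, c, hc, rfl⟩ | ⟨i, t, hst, rfl⟩
  · have heq : u⁻¹ * (c⁻¹ * (L.rotate i).prod * c) * u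
        = (c * u)⁻¹ * (L.rotate i).prod * (c * u) := by group
    rw [heq]
    exact key hφ hψ hL i (mul_mem (amalgC_le_fac b₀ hc) hu)
  · rcases List.eq_nil_or_concat t with rfl | ⟨ts, o, rfl⟩
    · exact absurd rfl hst.1
    rw [List.concat_eq_append] at *
    obtain ⟨bo, holt⟩ := hst.2.1 o (by simp)
    by_cases huc : u ∈ amalgC φ ψ
    · obtain ⟨t', hst', hprod⟩ := hst.fold hφ hψ huc
      exact Or.inr ⟨i, t', hst', by rw [hprod]; group⟩
    have hult : IsLt b₀ u := ⟨hu, huc⟩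
    by_cases hbb : b₀ = bo
    · subst hbb
      cases ts with
      | nil =>
        simp only [List.nil_append]
        have heq : u⁻¹ * (([o].prod)⁻¹ * (L.rotate i).prod * [o].prod) * u
            = (o * u)⁻¹ * (L.rotate i).prod * (o * u) := by simp; group
        rw [heq]
        exact key hφ hψ hL i (mul_mem holt.1 hu)
      | cons z ts' =>
        by_cases hωc : o * u ∈ amalgC φ ψ
        · obtain ⟨t', hst', hprod⟩ := (hst.of_concat (by simp)).fold hφ hψ hωc
          refine Or.inr ⟨i, t', hst', ?_⟩
          rw [hprod]
          simp only [List.prod_append, List.prod_cons, List.prod_nil, mul_one]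
          group
        · have hω : IsLt b₀ (o * u) := ⟨mul_mem holt.1 hu, hωc⟩
          obtain ⟨hne, hlet, hch, b, q₁, hq₁, hqlt, pl, hpl, hplf, hplq⟩ := hst
          refine Or.inr ⟨i, (z :: ts') ++ [o * u], ⟨by simp, ?_, ?_, ?_⟩, ?_⟩
          · intro x hx
            rcases List.mem_append.1 hx with h' | h'
            · exact hlet x (List.mem_append.2 (Or.inl h'))
            · rw [List.mem_singleton] at h'; subst h'
              exact ⟨b₀, hω⟩
          · obtain ⟨hc1, -, hc3⟩ := List.isChain_append.1 hch
            refine List.isChain_append.2 ⟨hc1, by simp, ?_⟩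
            intro x hx y hy
            simp only [List.head?_cons, Option.mem_def, Option.some.injEq] at hy
            subst hy
            exact (hc3 x hx o (by simp)).congr_right hφ hψ holt hω
          · refine ⟨b, q₁, ?_, hqlt, pl, hpl, hplf, hplq⟩
            rw [head?_append_left (by simp)]
            rw [head?_append_left (by simp)] at hq₁
            exact hq₁
          · simp only [List.prod_append, List.prod_cons, List.prod_nil, mul_one]
            group
    · have hbo : b₀ = !bo := by cases bo <;> cases b₀ <;> simp_all
      obtain ⟨hne, hlet, hch, b, q₁, hq₁, hqlt, pl, hpl, hplf, hplq⟩ := hst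
      refine Or.inr ⟨i, (ts ++ [o]) ++ [u], ⟨by simp, ?_, ?_, ?_⟩, ?_⟩
      · intro x hx
        rcases List.mem_append.1 hx with h' | h'
        · exact hlet x h'
        · rw [List.mem_singleton] at h'; subst h'
          exact ⟨b₀, hult⟩
      · refine List.isChain_append.2 ⟨hch, by simp, ?_⟩
        intro x hx y hy
        simp only [List.head?_cons, Option.mem_def, Option.some.injEq] at hy
        subst hy
        have hx' : x = o := by
          rw [List.getLast?_concat] at hx
          exact (Option.some_injective _ hx).symm
        subst hx'
        exact ⟨bo, holt, hbo ▸ hult⟩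
      · refine ⟨b, q₁, ?_, hqlt, pl, hpl, hplf, hplq⟩
        rw [head?_append_left (by simp [hne])]
        exact hq₁
      · simp only [List.prod_append, List.prod_cons, List.prod_nil, mul_one]
        group

end Aux5
section Aux6

open Monoid PushoutI

variable {A B C : Type u} [Group A] [Group B] [Group C] {φ : C →* A} {ψ : C →* B}

lemma ARel.symm' {x y : Amalg φ ψ} (h : ARel x y) : ARel y x := by
  obtain ⟨b, hx, hy⟩ := h
  exact ⟨!b, hy, by simpa using hx⟩

lemma ARel.congr_left (hφ : Function.Injective φ) (hψ : Function.Injective ψ)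
    {x x' y : Amalg φ ψ} (h : ARel x y) {b : Bool} (hx : IsLt b x) (hx' : IsLt b x') :
    ARel x' y := by
  obtain ⟨b', hx0, hy⟩ := h
  exact ⟨b', (IsLt.unique hφ hψ hx hx0) ▸ hx', hy⟩

lemma toLetter {x : Amalg φ ψ} (h : (x ∈ facA φ ψ ∨ x ∈ facB φ ψ) ∧ x ∉ amalgC φ ψ) :
    Letter x := by
  rcases h with ⟨h1 | h1, h2⟩
  · exact ⟨true, h1, h2⟩
  · exact ⟨false, h1, h2⟩

lemma Letter.not_c {x : Amalg φ ψ} (h : Letter x) : x ∉ amalgC φ ψ := by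
  obtain ⟨b, hb⟩ := h; exact hb.2

lemma toARel {x y : Amalg φ ψ} (hx : Letter x) (hy : Letter y)
    (h : (x ∈ facA φ ψ → y ∈ facB φ ψ) ∧ (x ∈ facB φ ψ → y ∈ facA φ ψ)) : ARel x y := by
  obtain ⟨b, hb⟩ := hx
  cases b with
  | true => exact ⟨true, hb, h.1 hb.1, hy.not_c⟩
  | false => exact ⟨false, hb, h.2 hb.1, hy.not_c⟩

lemma chain_toARel {l : List (Amalg φ ψ)} (hlet : ∀ x ∈ l, Letter x)
    (h : l.Chain' fun x y => (x ∈ facA φ ψ → y ∈ facB φ ψ) ∧ (x ∈ facB φ ψ → y ∈ facA φ ψ)) :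
    l.Chain' ARel := by
  induction l with
  | nil => simp [List.Chain']
  | cons a l ih =>
    rw [List.Chain', List.isChain_cons] at h ⊢
    refine ⟨fun y hy => toARel (hlet a (by simp)) (hlet y (by
        exact List.mem_cons_of_mem _ (List.mem_of_mem_head? hy))) (h.1 y hy),
      ih (fun x hx => hlet x (List.mem_cons_of_mem _ hx)) h.2⟩

lemma conj_list_letters {l : List (Amalg φ ψ)} {c : Amalg φ ψ} (hc : c ∈ amalgC φ ψ)
    (hlet : ∀ x ∈ l, Letter x) : ∀ x ∈ l.map (fun x => c⁻¹ * x * c), Letter x := by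
  intro x hx
  obtain ⟨y, hy, rfl⟩ := List.mem_map.1 hx
  obtain ⟨b, hb⟩ := hlet y hy
  exact ⟨b, hb.conj_c hc⟩

lemma conj_list_chain {l : List (Amalg φ ψ)} {c : Amalg φ ψ} (hc : c ∈ amalgC φ ψ)
    (h : l.Chain' ARel) : (l.map (fun x => c⁻¹ * x * c)).Chain' ARel := by
  rw [List.Chain', List.isChain_map]
  exact h.imp (fun a b ⟨b0, ha, hb⟩ => ⟨b0, ha.conj_c hc, hb.conj_c hc⟩)

lemma conj_list_prod {G : Type*} [Group G] (l : List G) (c : G) :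
    (l.map (fun x => c⁻¹ * x * c)).prod = c⁻¹ * l.prod * c := by
  induction l with
  | nil => simp
  | cons a l ih => simp only [List.map_cons, List.prod_cons, ih]; group

lemma conj_mem_GB (hφ : Function.Injective φ) (hψ : Function.Injective ψ)
    {L : List (Amalg φ ψ)} (hL : CycP L) (x : Amalg φ ψ) :
    GB L (x⁻¹ * L.prod * x) := by
  have main : ∀ x : Amalg φ ψ, ∀ h, GB L h → GB L (x⁻¹ * h * x) := by
    intro x
    induction x using Monoid.PushoutI.induction_on with
    | of i g =>
      intro h hgb
      exact hgb.step hφ hψ hL (b₀ := i) ⟨g, rfl⟩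
    | base c =>
      intro h hgb
      exact hgb.step hφ hψ hL (b₀ := true) (amalgC_le_fac true ⟨c, rfl⟩)
    | mul x y ihx ihy =>
      intro h hgb
      have heq : (x * y)⁻¹ * h * (x * y) = y⁻¹ * (x⁻¹ * h * x) * y := by group
      rw [heq]
      exact ihy _ (ihx _ hgb)
  exact main x L.prod (Or.inl ⟨0, 1, one_mem _, by simp⟩)

end Aux6
section Aux7

open Monoid PushoutI

variable {A B C : Type u} [Group A] [Group B] [Group C] {φ : C →* A} {ψ : C →* B}

lemma getLast?_map' {α β : Type*} (f : α → β) (l : List α) :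
    (l.map f).getLast? = l.getLast?.map f := by
  rw [← List.head?_reverse, ← List.map_reverse, List.head?_map, List.head?_reverse]

lemma getLast?_append_right {α : Type*} {l₁ l₂ : List α} (h : l₂ ≠ []) :
    (l₁ ++ l₂).getLast? = l₂.getLast? := by
  rw [← List.head?_reverse, List.reverse_append,
    head?_append_left (by simpa using h), List.head?_reverse]

lemma bad_form (hφ : Function.Injective φ) (hψ : Function.Injective ψ)
    {L t : List (Amalg φ ψ)} {i : ℕ} (hL : CycP L) (hst : Stack L t i) :
    ∃ F : List (Amalg φ ψ), F.prod = t.prod⁻¹ * (L.rotate i).prod * t.prod ∧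
      (∀ x ∈ F, Letter x) ∧ F.Chain' ARel ∧ 3 ≤ F.length ∧
      ∃ (β : Bool) (x y : Amalg φ ψ), F.head? = some x ∧ F.getLast? = some y ∧
        IsLt β x ∧ IsLt β y := by
  obtain ⟨hne, hlet, hch, b, q₁, hq₁, hqlt, pl, hpl, hplf, hplq⟩ := hst
  obtain ⟨trest, rfl⟩ : ∃ trest, t = q₁ :: trest := by
    cases t with
    | nil => exact absurd rfl hne
    | cons a trest =>
      exact ⟨trest, by rw [show a = q₁ from Option.some_injective _ (by simpa using hq₁)]⟩
  have hPc : CycP (L.rotate i) := hL.rotate i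
  have hPne : L.rotate i ≠ [] := by
    intro h
    have := hPc.2.2.1
    rw [h] at this; simp at this
  have hPd : (L.rotate i).dropLast ++ [pl] = L.rotate i := by
    have h1 := List.dropLast_append_getLast hPne
    rwa [show (L.rotate i).getLast hPne = pl from Option.some_injective _
      (by rw [← List.getLast?_eq_getLast hPne, hpl])] at h1
  obtain ⟨p, pinit, hPinit⟩ : ∃ p pinit, (L.rotate i).dropLast = p :: pinit := by
    have h2 : 2 ≤ (L.rotate i).length := hPc.2.2.1
    cases h : (L.rotate i).dropLast with
    | nil =>
      exfalso
      have := congrArg List.length hPd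
      rw [h] at this; simp only [List.nil_append, List.length_singleton] at this; omega
    | cons p pinit => exact ⟨p, pinit, rfl⟩
  have hPhead : (L.rotate i).head? = some p := by
    rw [← hPd, hPinit]; rfl
  have hpllet : Letter pl :=
    hPc.1 pl (List.mem_of_mem_getLast? hpl)
  have hplt : IsLt b pl := ⟨hplf, hpllet.not_c⟩
  have hpt : IsLt (!b) p := by
    obtain ⟨b₂, h1, h2⟩ := hPc.2.2.2 p hPhead pl hpl
    rwa [IsLt.unique hφ hψ h1 hplt] at h2
  have hmlt : IsLt b (pl * q₁) := ⟨mul_mem hplf hqlt.1, hplq⟩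
  have hPch : ((L.rotate i).dropLast ++ [pl]).Chain' ARel := by rw [hPd]; exact hPc.2.1
  refine ⟨((q₁ :: trest).map (fun x => x⁻¹)).reverse ++
      ((L.rotate i).dropLast ++ ((pl * q₁) :: trest)), ?_, ?_, ?_, ?_, ?_⟩
  · have hPprod : (L.rotate i).prod = (L.rotate i).dropLast.prod * pl := by
      conv_lhs => rw [← hPd]
      rw [List.prod_append]; simp
    rw [List.prod_append, List.prod_append, ← List.prod_inv_reverse, hPprod]
    simp only [List.prod_cons]
    group
  · intro x hx
    rcases List.mem_append.1 hx with h' | h'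
    · rw [List.mem_reverse, List.mem_map] at h'
      obtain ⟨y, hy, rfl⟩ := h'
      obtain ⟨by', hby⟩ := hlet y hy
      exact ⟨by', hby.inv⟩
    · rcases List.mem_append.1 h' with h'' | h''
      · exact hPc.1 x (List.mem_of_mem_dropLast h'')
      · rcases List.mem_cons.1 h'' with rfl | h''
        · exact ⟨b, hmlt⟩
        · exact hlet x (List.mem_cons_of_mem _ h'')
  · refine List.isChain_append.2 ⟨?_, List.isChain_append.2
      ⟨(List.isChain_append.1 hPch).1, ?_, ?_⟩, ?_⟩
    · rw [List.isChain_reverse, List.isChain_map]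
      refine hch.imp ?_
      rintro a c ⟨w, ha, hc⟩
      exact ⟨!w, hc.inv, by simpa using ha.inv⟩
    · refine List.isChain_cons.2 ⟨?_, hch.tail⟩
      intro y hy
      exact ((List.isChain_cons.1 hch).1 y hy).congr_left hφ hψ hqlt hmlt
    · intro x hx y hy
      have hy' : y = pl * q₁ := by simp at hy; exact hy.symm
      subst hy'
      exact ((List.isChain_append.1 hPch).2.2 x hx pl (by simp)).congr_right hφ hψ hplt hmlt
    · intro x hx y hy
      have hx' : x = q₁⁻¹ := by
        rw [List.getLast?_reverse, List.head?_map] at hx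
        simp at hx; exact hx.symm
      have hy' : y = p := by
        rw [head?_append_left (by simp [hPinit]), hPinit] at hy
        simp at hy; exact hy.symm
      subst hx' hy'
      exact ⟨b, hqlt.inv, hpt⟩
  · simp only [List.length_append, List.length_reverse, List.length_map, List.length_cons,
      hPinit]
    omega
  · rw [head?_append_left (by simp), List.head?_reverse, getLast?_map',
      getLast?_append_right (by simp), getLast?_append_right (by simp)]
    cases trest with
    | nil =>
      refine ⟨b, q₁⁻¹, pl * q₁, by simp, by simp, hqlt.inv, hmlt⟩
    | cons z rest =>
      have htl : ∃ tl, (z :: rest).getLast? = some tl := exists_getLast? (by simp)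
      obtain ⟨tl, htl⟩ := htl
      have htmem : tl ∈ z :: rest := List.mem_of_mem_getLast? htl
      obtain ⟨bk, hk⟩ := hlet tl (List.mem_cons_of_mem _ htmem)
      refine ⟨bk, tl⁻¹, tl, ?_, ?_, hk.inv, hk⟩
      · rw [show (q₁ :: z :: rest).getLast? = (z :: rest).getLast? from rfl, htl]
        rfl
      · rw [show ((pl * q₁) :: z :: rest).getLast? = (z :: rest).getLast? from rfl, htl]

end Aux7

/-- Conjugacy criterion, length `≥ 2` case: if `g = g₁⋯g_r` (`r ≥ 2`) and `h = h₁⋯h_s` are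
cyclically reduced forms of conjugate elements, then `s = r` and `h` is obtained from `g` by a
cyclic permutation of `g₁, …, g_r` followed by conjugation by an element of `C`. -/
theorem conj_cyclic_permutation
    (hφ : Function.Injective φ) (hψ : Function.Injective ψ)
    (L M : List (Amalg φ ψ))
    (hL : CyclicallyReducedForm φ ψ 1 L) (hr : 2 ≤ L.length)
    (hM : CyclicallyReducedForm φ ψ 1 M)
    (hconj : ∃ x : Amalg φ ψ, x⁻¹ * L.prod * x = M.prod) :
    M.length = L.length ∧
      ∃ i < L.length, ∃ c ∈ amalgC φ ψ, M.prod = c⁻¹ * (L.rotate i).prod * c := by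
  obtain ⟨⟨-, hLlet', hLch'⟩, hLdisj⟩ := hL
  have hLlet : ∀ x ∈ L, Letter x := fun x hx => toLetter (hLlet' x hx)
  have hLch : L.Chain' ARel := chain_toARel hLlet hLch'
  have hLends : ∀ x ∈ L.head?, ∀ y ∈ L.getLast?, ARel y x := by
    rcases hLdisj with h0 | h1 | ⟨-, hend⟩
    · omega
    · omega
    · intro x hx y hy
      exact (toARel (hLlet x (List.mem_of_mem_head? hx))
        (hLlet y (List.mem_of_mem_getLast? hy)) (hend x y hx hy)).symm'
  have hLcyc : CycP L := ⟨hLlet, hLch, hr, hLends⟩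
  obtain ⟨⟨-, hMlet', hMch'⟩, hMdisj⟩ := hM
  have hMlet : ∀ x ∈ M, Letter x := fun x hx => toLetter (hMlet' x hx)
  have hMch : M.Chain' ARel := chain_toARel hMlet hMch'
  obtain ⟨x, hx⟩ := hconj
  have hgb : GB L M.prod := hx ▸ conj_mem_GB hφ hψ hLcyc x
  rcases hgb with ⟨i₀, c, hc, heq⟩ | ⟨i, t, hst, heq⟩
  · have hFlet := conj_list_letters hc (hLcyc.rotate i₀).1
    have hFch := conj_list_chain hc (hLcyc.rotate i₀).2.1
    have hFprod : ((L.rotate i₀).map (fun y => c⁻¹ * y * c)).prod = M.prod := by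
      rw [conj_list_prod, heq]
    have hmap := invar hφ hψ hMlet hMch hFlet hFch hFprod.symm
    have hlen : M.length = L.length := by
      have := congrArg List.length hmap
      simpa using this
    refine ⟨hlen, i₀ % L.length, Nat.mod_lt _ (by omega), c, hc, ?_⟩
    rw [List.rotate_mod]
    exact heq
  · exfalso
    obtain ⟨F, hFprod, hFlet, hFch, hFlen, β, fx, fy, hfx, hfy, hbx, hby⟩ :=
      bad_form hφ hψ hLcyc hst
    have hmap := invar hφ hψ hMlet hMch hFlet hFch (by rw [hFprod, ← heq])
    have hlen : M.length = F.length := by simpa using congrArg List.length hmap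
    have hMne : M ≠ [] := by
      intro h; rw [h] at hlen; simp at hlen; omega
    obtain ⟨mx, hmx⟩ : ∃ mx, M.head? = some mx := by
      cases M with
      | nil => exact absurd rfl hMne
      | cons a l => exact ⟨a, rfl⟩
    obtain ⟨my, hmy⟩ := exists_getLast? hMne
    rcases hMdisj with h0 | h1 | ⟨-, hend⟩
    · rw [h0] at hlen; omega
    · rw [h1.1] at hlen; omega
    have hrel : ARel mx my := toARel (hMlet mx (List.mem_of_mem_head? hmx))
      (hMlet my (List.mem_of_mem_getLast? hmy)) (hend mx my hmx hmy)
    have h1 : fB fx = fB mx := by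
      have := congrArg List.head? hmap
      rw [List.head?_map, List.head?_map, hmx, hfx] at this
      simpa using this.symm
    have h2 : fB fy = fB my := by
      have := congrArg List.getLast? hmap
      rw [getLast?_map', getLast?_map', hmy, hfy] at this
      simpa using this.symm
    have hmxlt : IsLt β mx := fB_transfer hφ hψ hbx (hMlet mx (List.mem_of_mem_head? hmx)) h1
    have hmylt : IsLt β my := fB_transfer hφ hψ hby (hMlet my (List.mem_of_mem_getLast? hmy)) h2
    obtain ⟨b', ha, hb⟩ := hrel
    have e1 := IsLt.unique hφ hψ ha hmxlt
    have e2 := IsLt.unique hφ hψ hb hmylt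
    rw [e1] at e2
    simp at e2
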